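/- arXiv:1210.8402 — 2 statements merged into one kernel-verified Lean document; each statement's English description precedes it below -/
import Mathlib

section
/- Let K be a field of arbitrary characteristic and R = K[x_1,…,x_n]. Then every homogeneous polynomial f ∈ R of degree d satisfies the higher-order Euler formula E_r·f = binom(d,r)·f (where binom(d,r) is taken via its image in K) for every r ≥ 1. -/
/-- The divided-power partial derivative `∂_i^{[j]}` on `K[x_1,…,x_n]`, determined on
monomials by `∂_i^{[j]}(x^a) = binom(a_i, j) • x^{a - j·e_i}` (zero when `a_i < j`). -/
noncomputable def dpDeriv (K : Type*) [CommRing K] {n : ℕ} (i : Fin n) (j : ℕ) :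
    MvPolynomial (Fin n) K →ₗ[K] MvPolynomial (Fin n) K :=
  (Finsupp.lsum K fun a : Fin n →₀ ℕ =>
    (((a i).choose j : K)) •
      (MvPolynomial.monomial (a - Finsupp.single i j) : K →ₗ[K] MvPolynomial (Fin n) K))
    ∘ₗ (AddMonoidAlgebra.coeffLinearEquiv K).toLinearMap

/-- The `r`-th Euler operator `E_r = Σ_{i_1+⋯+i_n=r} x_1^{i_1}⋯x_n^{i_n} ∂_1^{[i_1]}⋯∂_n^{[i_n]}`
on `K[x_1,…,x_n]`. -/
noncomputable def eulerOp (K : Type*) [CommRing K] (n : ℕ) (r : ℕ) :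
    MvPolynomial (Fin n) K →ₗ[K] MvPolynomial (Fin n) K :=
  ∑ c ∈ Finset.Nat.antidiagonalTuple n r,
    LinearMap.mulLeft K (MvPolynomial.monomial (Finsupp.equivFunOnFinite.symm c) (1 : K)) ∘ₗ
      ((List.finRange n).map fun i => dpDeriv K i (c i)).prod

open Finset MvPolynomial

lemma vdm {ι : Type*} [DecidableEq ι] (s : Finset ι) (a : ι → ℕ) (r : ℕ) :
    ∑ c ∈ s.piAntidiag r, ∏ i ∈ s, (a i).choose (c i) = (∑ i ∈ s, a i).choose r := by
  induction s using Finset.cons_induction generalizing r with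
  | empty =>
    rcases r with _ | r <;> simp [piAntidiag_empty]
  | cons i s hi ih =>
    rw [piAntidiag_cons, sum_disjiUnion, sum_cons, Nat.add_choose_eq]
    refine Finset.sum_congr rfl fun p hp => ?_
    rw [Finset.sum_map]
    have key : ∀ g ∈ s.piAntidiag p.2,
        ∏ j ∈ cons i s hi, (a j).choose ((addRightEmbedding
          (fun t => if t = i then p.1 else 0) g) j)
        = (a i).choose p.1 * ∏ j ∈ s, (a j).choose (g j) := by
      intro g hg
      rw [mem_piAntidiag] at hg
      have hgi : g i = 0 := by
        by_contra h
        exact hi (hg.2 i h)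
      rw [prod_cons]
      simp only [addRightEmbedding_apply, Pi.add_apply]
      congr 1
      · simp [hgi]
      · refine Finset.prod_congr rfl fun j hj => ?_
        have : j ≠ i := fun h => hi (h ▸ hj)
        simp [this]
    rw [Finset.sum_congr rfl key, ← Finset.mul_sum, ih]

lemma dpDeriv_monomial (K : Type*) [CommRing K] {n : ℕ} (i : Fin n) (j : ℕ)
    (a : Fin n →₀ ℕ) (k : K) :
    dpDeriv K i j (monomial a k) =
      ((a i).choose j : K) • monomial (a - Finsupp.single i j) k := by
  rw [dpDeriv, LinearMap.comp_apply]
  erw [Finsupp.lsum_single]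
  simp

lemma list_single_apply {n : ℕ} (c : Fin n → ℕ) (t : List (Fin n)) (i : Fin n)
    (hi : i ∉ t) : ((t.map fun j => Finsupp.single j (c j)).sum) i = 0 := by
  induction t with
  | nil => simp
  | cons b t ih =>
    simp only [List.mem_cons, not_or] at hi
    simp [Finsupp.single_apply, Ne.symm hi.1, ih hi.2]

lemma prod_dpDeriv (K : Type*) [CommRing K] {n : ℕ} (c : Fin n → ℕ)
    (l : List (Fin n)) (hl : l.Nodup) (a : Fin n →₀ ℕ) (k : K) :
    ((l.map fun i => dpDeriv K i (c i)).prod) (monomial a k) =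
      (l.map fun i => ((a i).choose (c i) : K)).prod •
        monomial (a - (l.map fun i => Finsupp.single i (c i)).sum) k := by
  induction l with
  | nil => simp [Module.End.one_apply]
  | cons i t ih =>
    rw [List.nodup_cons] at hl
    simp only [List.map_cons, List.prod_cons, List.sum_cons, Module.End.mul_apply,
      ih hl.2, map_smul, dpDeriv_monomial]
    have h1 : (a - (t.map fun j => Finsupp.single j (c j)).sum) i = a i := by
      simp [Finsupp.tsub_apply, list_single_apply c t i hl.1]
    rw [h1, smul_smul, mul_comm, tsub_tsub,
      add_comm ((t.map fun i => Finsupp.single i (c i)).sum)]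

lemma sum_singles {n : ℕ} (c : Fin n → ℕ) :
    ((List.finRange n).map fun i => Finsupp.single i (c i)).sum =
      Finsupp.equivFunOnFinite.symm c := by
  rw [← Fin.sum_univ_def]
  ext j
  simp [Finsupp.finset_sum_apply, Finsupp.single_apply]

lemma eulerOp_monomial (K : Type*) [CommRing K] {n : ℕ} (r : ℕ)
    (a : Fin n →₀ ℕ) (k : K) :
    eulerOp K n r (monomial a k) = ((∑ i, a i).choose r : K) • monomial a k := by
  rw [eulerOp, LinearMap.sum_apply]
  have key : ∀ c ∈ Finset.Nat.antidiagonalTuple n r,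
      (LinearMap.mulLeft K (monomial (Finsupp.equivFunOnFinite.symm c) (1 : K)) ∘ₗ
        ((List.finRange n).map fun i => dpDeriv K i (c i)).prod) (monomial a k)
      = ((∏ i, (a i).choose (c i) : ℕ) : K) • monomial a k := by
    intro c _
    rw [LinearMap.comp_apply,
      prod_dpDeriv K c (List.finRange n) (List.nodup_finRange n) a k,
      sum_singles, LinearMap.mulLeft_apply]
    rw [← Fin.prod_univ_def, ← Nat.cast_prod]
    rw [mul_smul_comm, monomial_mul, one_mul]
    by_cases hN : (∏ i, (a i).choose (c i)) = 0
    · simp [hN]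
    · have hle : Finsupp.equivFunOnFinite.symm c ≤ a := by
        rw [Finsupp.le_def]
        intro i
        have := Finset.prod_ne_zero_iff.mp hN i (Finset.mem_univ i)
        have : c i ≤ a i := by
          by_contra hlt
          exact this (Nat.choose_eq_zero_of_lt (Nat.lt_of_not_le hlt))
        simpa using this
      rw [add_tsub_cancel_of_le hle]
  rw [Finset.sum_congr rfl key, ← Finset.sum_smul, ← Nat.cast_sum,
    ← Finset.piAntidiag_univ_fin_eq_antidiagonalTuple r n, vdm]

/-- Over a field `K` of arbitrary characteristic, every homogeneous
polynomial `f ∈ K[x_1,…,x_n]` of degree `d` satisfies the higher-order Euler formula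
`E_r · f = binom(d, r) • f` (the binomial coefficient taken via its image in `K`)
for every `r ≥ 1`. -/
theorem euler_formula_homogeneous (K : Type*) [Field K] (n : ℕ)
    (f : MvPolynomial (Fin n) K) (d : ℕ) (hf : f.IsHomogeneous d) :
    ∀ r : ℕ, 1 ≤ r → eulerOp K n r f = (d.choose r : K) • f := by
  intro r _
  conv_lhs => rw [← f.support_sum_monomial_coeff]
  rw [map_sum]
  conv_rhs => rw [← f.support_sum_monomial_coeff, Finset.smul_sum]
  refine Finset.sum_congr rfl fun a ha => ?_
  rw [eulerOp_monomial]
  congr 2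
  have := hf (MvPolynomial.mem_support_iff.mp ha)
  rw [← this]
  congr 1
  rw [Finsupp.weight_apply, Finsupp.sum_fintype] <;> simp
end

section
/- Let p be a prime and let a, b ∈ ℤ be integers. If binom(a,r) ≡ binom(b,r) (mod p) for every natural number r ≥ 1, then a = b. -/
lemma aux_le (p : ℕ) (hp : p.Prime) (a b : ℤ)
    (h : ∀ r : ℕ, 1 ≤ r → Ring.choose a r ≡ Ring.choose b r [ZMOD p]) : a ≤ b := by
  have key : ∀ k : ℕ, 1 ≤ k → (p : ℤ) ∣ Ring.choose (a - b) k := by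
    intro k
    induction k using Nat.strong_induction_on with
    | _ k ih =>
      intro hk
      have hvdm : Ring.choose a k =
          ∑ ij ∈ Finset.HasAntidiagonal.antidiagonal k, Ring.choose b ij.1 * Ring.choose (a - b) ij.2 := by
        have := Ring.add_choose_eq (r := b) (s := a - b) k (Commute.all _ _)
        simpa using this
      -- split off the term (k, 0)
      have hmem : (k, 0) ∈ Finset.HasAntidiagonal.antidiagonal k := by simp
      rw [← Finset.add_sum_erase _ _ hmem] at hvdm
      simp only [Ring.choose_zero_right, mul_one] at hvdm
      have hdvd : (p : ℤ) ∣ ∑ ij ∈ (Finset.HasAntidiagonal.antidiagonal k).erase (k, 0),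
          Ring.choose b ij.1 * Ring.choose (a - b) ij.2 := by
        have h1 : (p : ℤ) ∣ Ring.choose a k - Ring.choose b k :=
          Int.ModEq.dvd (h k hk).symm
        have : Ring.choose a k - Ring.choose b k = ∑ ij ∈ (Finset.HasAntidiagonal.antidiagonal k).erase (k, 0),
            Ring.choose b ij.1 * Ring.choose (a - b) ij.2 := by
          rw [hvdm]; ring
        rwa [this] at h1
      -- all terms with ij.2 < k and ij.2 ≥ 1 are divisible by IH; remaining is (0,k)
      have hmem2 : (0, k) ∈ (Finset.HasAntidiagonal.antidiagonal k).erase (k, 0) := by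
        simp [Finset.mem_erase, Prod.ext_iff]
        omega
      rw [← Finset.add_sum_erase _ _ hmem2] at hdvd
      simp only [Ring.choose_zero_right, one_mul] at hdvd
      have hrest : (p : ℤ) ∣ ∑ ij ∈ ((Finset.HasAntidiagonal.antidiagonal k).erase (k, 0)).erase (0, k),
          Ring.choose b ij.1 * Ring.choose (a - b) ij.2 := by
        apply Finset.dvd_sum
        rintro ⟨i, j⟩ hij
        rw [Finset.mem_erase, Finset.mem_erase, Finset.HasAntidiagonal.mem_antidiagonal] at hij
        obtain ⟨hne1, hne2, hsum⟩ := hij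
        have h2lt : j < k := by
          rcases Nat.lt_or_ge j k with hlt | hge
          · exact hlt
          · exact absurd (by simp [show i = 0 by omega, show j = k by omega] : (i, j) = (0, k)) hne1
        have h21 : 1 ≤ j := by
          by_contra hc
          push_neg at hc
          exact absurd (by simp [show i = k by omega, show j = 0 by omega] : (i, j) = (k, 0)) hne2
        exact Dvd.dvd.mul_left (ih j h2lt h21) _
      have hfin := dvd_sub hdvd hrest
      simpa using hfin
  by_contra hab
  push_neg at hab
  set n : ℕ := (a - b).toNat with hn
  have hn1 : 1 ≤ n := by omega
  have hcn : (a - b) = (n : ℤ) := by omega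
  have : (p : ℤ) ∣ Ring.choose ((n : ℤ)) n := hcn ▸ key n hn1
  rw [Ring.choose_natCast, Nat.choose_self] at this
  have hp1 : (p : ℤ) = 1 := Int.eq_one_of_dvd_one (by positivity) this
  have := hp.one_lt
  omega

/-- Let `p` be a prime and `a, b ∈ ℤ`. If the generalized binomial
coefficients satisfy `binom(a,r) ≡ binom(b,r) (mod p)` for every natural number `r ≥ 1`,
then `a = b`.  Here `binom(a,b) = Ring.choose a b = a(a−1)⋯(a−b+1)/b! ∈ ℤ`. -/
theorem eq_of_choose_congr (p : ℕ) (hp : p.Prime) (a b : ℤ)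
    (h : ∀ r : ℕ, 1 ≤ r → Ring.choose a r ≡ Ring.choose b r [ZMOD p]) : a = b :=
  le_antisymm (aux_le p hp a b h) (aux_le p hp b a (fun r hr => (h r hr).symm))
end
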